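/- The double-parity set is independent in A_{n+2,n}: if two injective n-tuples from {1,...,n+2} both have missing-value pairs of opposite parity and both extend (missing values ordered even-then-odd) to even permutations, then they cannot differ in exactly one position. -/
import Mathlib


/-- The double-parity set is independent in `A_{n+2,n}`: if two injective
`n`-tuples from `{1,...,n+2}` each extend (appending first the even missing
value, then the odd missing value) to an even permutation of `{1,...,n+2}`,
then they cannot differ in exactly one position. -/
theorem double_parity_independent (n : ℕ) (v w : Fin n → Fin (n + 2))
    (hv : Function.Injective v) (hw : Function.Injective w)
    (hπ : ∃ π : Equiv.Perm (Fin (n + 2)),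
      (∀ i : Fin n, π (Fin.castLE (by omega) i) = v i) ∧
      Even (π ⟨n, by omega⟩).val ∧ Odd (π ⟨n + 1, by omega⟩).val ∧
      Equiv.Perm.sign π = 1)
    (hτ : ∃ τ : Equiv.Perm (Fin (n + 2)),
      (∀ i : Fin n, τ (Fin.castLE (by omega) i) = w i) ∧
      Even (τ ⟨n, by omega⟩).val ∧ Odd (τ ⟨n + 1, by omega⟩).val ∧
      Equiv.Perm.sign τ = 1) :
    ¬ ∃! i : Fin n, v i ≠ w i := by
  rintro ⟨j, hj, huniq⟩
  obtain ⟨π, hπ1, hπ2, hπ3, hπs⟩ := hπ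
  obtain ⟨τ, hτ1, hτ2, hτ3, hτs⟩ := hτ
  have hle : n ≤ n + 2 := by omega
  have hπ1' : ∀ i : Fin n, π (Fin.castLE hle i) = v i := hπ1
  have hτ1' : ∀ i : Fin n, τ (Fin.castLE hle i) = w i := hτ1
  set a : Fin (n + 2) := ⟨n, by omega⟩ with ha
  set b : Fin (n + 2) := ⟨n + 1, by omega⟩ with hb
  set c : Fin (n + 2) := Fin.castLE hle j with hc
  have hπ2' : Even (π a).val := hπ2
  have hπ3' : Odd (π b).val := hπ3
  have hτ2' : Even (τ a).val := hτ2
  have hτ3' : Odd (τ b).val := hτ3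
  set σ : Equiv.Perm (Fin (n + 2)) := τ.symm * π with hσdef
  have hτσ : ∀ x, τ (σ x) = π x := fun x => τ.apply_symm_apply (π x)
  have hσs : Equiv.Perm.sign σ = 1 := by
    rw [hσdef, map_mul, hπs, Equiv.Perm.sign_symm, hτs]; rfl
  -- basic distinctness facts
  have hab : a ≠ b := by
    intro h; have := congrArg Fin.val h; simp [ha, hb] at this
  have hac : a ≠ c := by
    intro h; have := congrArg Fin.val h
    have hjn := j.isLt
    simp [ha, hc] at this; omega
  have hbc : b ≠ c := by
    intro h; have := congrArg Fin.val h
    have hjn := j.isLt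
    simp [hb, hc] at this; omega
  have heq : ∀ i : Fin n, i ≠ j → v i = w i := by
    intro i hij
    by_contra h
    exact hij (huniq i h)
  have h1 : ∀ i : Fin n, i ≠ j → σ (Fin.castLE hle i) = Fin.castLE hle i := by
    intro i hij
    apply τ.injective
    rw [hτσ, hπ1', hτ1', heq i hij]
  have h2 : σ c ≠ c := by
    intro h
    apply hj
    have h' := hτσ c
    rw [h, hc, hπ1', hτ1'] at h'
    exact h'.symm
  have tri : ∀ x : Fin (n + 2), (∃ i : Fin n, x = Fin.castLE hle i) ∨ x = a ∨ x = b := by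
    intro x
    rcases Nat.lt_trichotomy x.val n with h | h | h
    · exact Or.inl ⟨⟨x.val, h⟩, Fin.ext rfl⟩
    · exact Or.inr (Or.inl (Fin.ext h))
    · refine Or.inr (Or.inr (Fin.ext ?_))
      have := x.isLt; simp [hb]; omega
  have mem : ∀ x, (x = a ∨ x = b ∨ x = c) → (σ x = a ∨ σ x = b ∨ σ x = c) := by
    intro x hx
    rcases tri (σ x) with ⟨i, hi⟩ | h | h
    · by_cases hij : i = j
      · right; right; rw [hi, hij, hc]
      · exfalso
        have hxi : x = Fin.castLE hle i := σ.injective (by rw [hi, h1 i hij])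
        have hlt : i.val < n := i.isLt
        rcases hx with h | h | h
        · rw [h] at hxi; have := congrArg Fin.val hxi; simp [ha] at this; omega
        · rw [h] at hxi; have := congrArg Fin.val hxi; simp [hb] at this; omega
        · rw [h, hc] at hxi
          exact hij ((Fin.castLE_injective hle hxi).symm)
    · exact Or.inl h
    · exact Or.inr (Or.inl h)
  -- parity contradiction helper
  have parity : ∀ {x y : Fin (n + 2)}, Even x.val → Odd y.val → x ≠ y := by
    intro x y hx hy h
    rw [h] at hx
    exact (Nat.not_odd_iff_even.mpr hx) hy
  -- sign contradiction helper
  have signswap : ∀ {p q : Fin (n + 2)}, p ≠ q → σ ≠ Equiv.swap p q := by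
    intro p q hpq h
    rw [h, Equiv.Perm.sign_swap hpq] at hσs
    exact absurd hσs (by decide)
  rcases mem c (Or.inr (Or.inr rfl)) with hca | hcb | hcc
  · -- σ c = a
    have hsa : σ a ≠ a := fun h => hac (σ.injective (hca.trans h.symm)).symm
    rcases mem a (Or.inl rfl) with h | hsab | hsac
    · exact hsa h
    · -- σ a = b : π a = τ b, even = odd
      have : π a = τ b := by rw [← hτσ a, hsab]
      exact parity hπ2' hτ3' this
    · -- σ a = c, so σ b = b, σ = swap c a
      have hsb : σ b = b := by
        rcases mem b (Or.inr (Or.inl rfl)) with h | h | h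
        · exact absurd (σ.injective (h.trans hca.symm)) hbc
        · exact h
        · exact absurd (σ.injective (h.trans hsac.symm)) hab.symm
      apply signswap (Ne.symm hac)
      apply Equiv.ext
      intro x
      rcases tri x with ⟨i, hi⟩ | h | h
      · subst hi
        by_cases hij : i = j
        · subst hij
          rw [← hc, hca, Equiv.swap_apply_left]
        · rw [h1 i hij, Equiv.swap_apply_of_ne_of_ne]
          · intro h; exact hij ((Fin.castLE_injective hle) (h.trans hc))
          · intro h
            have := congrArg Fin.val h; have := i.isLt; simp [ha] at *; omega
      · subst h; rw [hsac, Equiv.swap_apply_right]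
      · subst h; rw [hsb, Equiv.swap_apply_of_ne_of_ne hbc hab.symm]
  · -- σ c = b
    have hsb : σ b ≠ b := fun h => hbc (σ.injective (h.trans hcb.symm))
    rcases mem b (Or.inr (Or.inl rfl)) with hsba | h | hsbc
    · -- σ b = a : π b = τ a, odd = even
      have : π b = τ a := by rw [← hτσ b, hsba]
      exact parity hτ2' hπ3' this.symm
    · exact hsb h
    · -- σ b = c, so σ a = a, σ = swap c b
      have hsa : σ a = a := by
        rcases mem a (Or.inl rfl) with h | h | h
        · exact h
        · exact absurd (σ.injective (h.trans hcb.symm)) hac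
        · exact absurd (σ.injective (h.trans hsbc.symm)) hab
      apply signswap (Ne.symm hbc)
      apply Equiv.ext
      intro x
      rcases tri x with ⟨i, hi⟩ | h | h
      · subst hi
        by_cases hij : i = j
        · subst hij
          rw [← hc, hcb, Equiv.swap_apply_left]
        · rw [h1 i hij, Equiv.swap_apply_of_ne_of_ne]
          · intro h; exact hij ((Fin.castLE_injective hle) (h.trans hc))
          · intro h
            have := congrArg Fin.val h; have := i.isLt; simp [hb] at *; omega
      · subst h; rw [hsa, Equiv.swap_apply_of_ne_of_ne hac hab]
      · subst h; rw [hsbc, Equiv.swap_apply_right]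
  · exact h2 hcc
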